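/- Let V be a real inner product space of dimension 2m ≥ 4 with a compatible complex structure J (J is orthogonal, J² = -Id). Define the algebraic curvature operator K(X,Y) = (1/4)(⟨Y,·⟩X - ⟨X,·⟩Y + ⟨JY,·⟩JX - ⟨JX,·⟩JY + 2⟨X,JY⟩J). If Q is a symmetric endomorphism of V commuting with J such that [K(X,Z),Q] = 0 for all X ∈ V, for some fixed nonzero Z ∈ V, then Q is a real multiple of the identity. -/

import Mathlib

/-- The constant holomorphic sectional curvature algebraic curvature tensor
`K(X,Y)W = (1/4)(⟨Y,W⟩X - ⟨X,W⟩Y + ⟨JY,W⟩JX - ⟨JX,W⟩JY + 2⟨X,JY⟩JW)`. -/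
noncomputable def chscK {V : Type*} [NormedAddCommGroup V] [InnerProductSpace ℝ V]
    (J : V →ₗ[ℝ] V) (X Y W : V) : V :=
  (1 / 4 : ℝ) • ((inner ℝ Y W : ℝ) • X - (inner ℝ X W : ℝ) • Y
    + (inner ℝ (J Y) W : ℝ) • J X - (inner ℝ (J X) W : ℝ) • J Y
    + (2 * (inner ℝ X (J Y) : ℝ)) • J W)

theorem stmt0 {V : Type*} [NormedAddCommGroup V] [InnerProductSpace ℝ V]
    [FiniteDimensional ℝ V] (m : ℕ) (hm : 2 ≤ m)
    (hdim : Module.finrank ℝ V = 2 * m)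
    (J : V →ₗ[ℝ] V) (hJ2 : ∀ X, J (J X) = -X)
    (hJg : ∀ X Y : V, (inner ℝ (J X) (J Y) : ℝ) = inner ℝ X Y)
    (Q : V →ₗ[ℝ] V)
    (hQsym : ∀ X Y : V, (inner ℝ (Q X) Y : ℝ) = inner ℝ X (Q Y))
    (hQJ : ∀ X, Q (J X) = J (Q X))
    (Z : V) (hZ : Z ≠ 0)
    (hcomm : ∀ X W : V, chscK J X Z (Q W) = Q (chscK J X Z W)) :
    ∃ c : ℝ, ∀ W, Q W = c • W := by
  -- J is skew-adjoint
  have hskew : ∀ X Y : V, (inner ℝ (J X) Y : ℝ) = -inner ℝ X (J Y) := by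
    intro X Y
    have h := hJg X (J Y)
    rw [hJ2] at h
    rw [inner_neg_right] at h
    linarith
  set s : ℝ := (inner ℝ Z Z : ℝ) with hs_def
  have hsne : s ≠ 0 := fun h => hZ (inner_self_eq_zero.mp h)
  have hs : 0 < s := lt_of_le_of_ne real_inner_self_nonneg (Ne.symm hsne)
  have hZJZ : (inner ℝ Z (J Z) : ℝ) = 0 := by
    have h := hskew Z Z
    have h2 : (inner ℝ (J Z) Z : ℝ) = inner ℝ Z (J Z) := real_inner_comm _ _
    linarith
  have hJZZ : (inner ℝ (J Z) Z : ℝ) = 0 := by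
    rw [real_inner_comm]; exact hZJZ
  have hJZJZ : (inner ℝ (J Z) (J Z) : ℝ) = s := hJg Z Z
  have hQZJZ : (inner ℝ (Q Z) (J Z) : ℝ) = 0 := by
    have h1 : (inner ℝ (Q Z) (J Z) : ℝ) = inner ℝ Z (Q (J Z)) := hQsym Z (J Z)
    rw [hQJ] at h1
    have h2 : (inner ℝ Z (J (Q Z)) : ℝ) = - inner ℝ (J Z) (Q Z) := by
      have := hskew Z (Q Z)
      linarith
    have h3 : (inner ℝ (J Z) (Q Z) : ℝ) = inner ℝ (Q Z) (J Z) := real_inner_comm _ _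
    linarith
  have hJZQZ : (inner ℝ (J Z) (Q Z) : ℝ) = 0 := by
    rw [real_inner_comm]; exact hQZJZ
  -- The key vector identity coming from [K(X,Z), Q] = 0
  have key : ∀ X W : V,
      (inner ℝ Z (Q W) : ℝ) • X - (inner ℝ X (Q W) : ℝ) • Z
        + (inner ℝ (J Z) (Q W) : ℝ) • J X - (inner ℝ (J X) (Q W) : ℝ) • J Z
      = (inner ℝ Z W : ℝ) • Q X - (inner ℝ X W : ℝ) • Q Z
        + (inner ℝ (J Z) W : ℝ) • J (Q X) - (inner ℝ (J X) W : ℝ) • J (Q Z) := by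
    intro X W
    have h := hcomm X W
    unfold chscK at h
    simp only [map_smul, map_add, map_sub, hQJ] at h
    have h2 := smul_right_injective V (by norm_num : (1/4 : ℝ) ≠ 0) h
    exact add_right_cancel h2
  -- Orthogonality: for X ⊥ Z and X ⊥ JZ, we get ⟪X, QZ⟫ = 0
  have hA : ∀ X : V, (inner ℝ X Z : ℝ) = 0 → (inner ℝ X (J Z) : ℝ) = 0 →
      (inner ℝ X (Q Z) : ℝ) = 0 := by
    intro X hXZ hXJZ
    have hJXZ : (inner ℝ (J X) Z : ℝ) = 0 := by
      have := hskew X Z; linarith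
    have h := key X Z
    have h2 := congrArg (fun v => (inner ℝ v Z : ℝ)) h
    simp only [inner_sub_left, inner_add_left, real_inner_smul_left] at h2
    rw [hXZ, hJXZ, hJZZ, hJZQZ] at h2
    have hQXZ : (inner ℝ (Q X) Z : ℝ) = inner ℝ X (Q Z) := hQsym X Z
    rw [hQXZ] at h2
    have hXQZ : (inner ℝ X (Q Z) : ℝ) = 0 := by nlinarith [h2]
    exact hXQZ
  set c : ℝ := (inner ℝ Z (Q Z) : ℝ) / s with hc_def
  -- Q Z = c • Z
  have hQZ : Q Z = c • Z := by
    set v : V := Q Z - c • Z with hv_def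
    have hvZ : (inner ℝ v Z : ℝ) = 0 := by
      simp only [hv_def, inner_sub_left, real_inner_smul_left]
      have h1 : (inner ℝ (Q Z) Z : ℝ) = inner ℝ Z (Q Z) := hQsym Z Z
      rw [h1, hc_def]
      field_simp
      rw [← hs_def]; ring
    have hvJZ : (inner ℝ v (J Z) : ℝ) = 0 := by
      simp only [hv_def, inner_sub_left, real_inner_smul_left]
      rw [hQZJZ, hZJZ]
      ring
    have hvQZ : (inner ℝ v (Q Z) : ℝ) = 0 := hA v hvZ hvJZ
    have hvv : (inner ℝ v v : ℝ) = 0 := by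
      have : (inner ℝ v v : ℝ) = inner ℝ v (Q Z) - c * inner ℝ v Z := by
        simp only [hv_def]
        rw [inner_sub_right, real_inner_smul_right]
      rw [this, hvQZ, hvZ]; ring
    have hv0 : v = 0 := inner_self_eq_zero.mp hvv
    have := sub_eq_zero.mp hv0
    exact this
  have hQJZ : Q (J Z) = c • J Z := by rw [hQJ, hQZ, map_smul]
  -- Q X = c • X for X ⊥ Z, JZ
  have hQX : ∀ X : V, (inner ℝ X Z : ℝ) = 0 → (inner ℝ X (J Z) : ℝ) = 0 → Q X = c • X := by
    intro X hXZ hXJZ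
    have hJXZ : (inner ℝ (J X) Z : ℝ) = 0 := by
      have := hskew X Z; linarith
    have h := key X Z
    have hXQZ : (inner ℝ X (Q Z) : ℝ) = 0 := by
      rw [hQZ, real_inner_smul_right, hXZ]; ring
    have hJXQZ : (inner ℝ (J X) (Q Z) : ℝ) = 0 := by
      rw [hQZ, real_inner_smul_right, hJXZ]; ring
    rw [hXQZ, hJXQZ, hXZ, hJXZ, hJZZ, hJZQZ] at h
    simp only [zero_smul, sub_zero, add_zero] at h
    -- h : (inner Z (Q Z)) • X = (inner Z Z) • Q X
    have h2 : Q X = s⁻¹ • ((inner ℝ Z (Q Z) : ℝ) • X) := by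
      rw [h]
      rw [smul_smul, inv_mul_cancel₀ (ne_of_gt hs), one_smul]
    rw [h2, smul_smul, hc_def]
    ring_nf
  refine ⟨c, fun W => ?_⟩
  set p : ℝ := (inner ℝ W Z : ℝ) / s with hp_def
  set q : ℝ := (inner ℝ W (J Z) : ℝ) / s with hq_def
  set X : V := W - p • Z - q • J Z with hX_def
  have hXZ : (inner ℝ X Z : ℝ) = 0 := by
    simp only [hX_def, inner_sub_left, real_inner_smul_left]
    rw [hJZZ, hp_def]
    field_simp
    rw [← hs_def]; ring
  have hXJZ : (inner ℝ X (J Z) : ℝ) = 0 := by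
    simp only [hX_def, inner_sub_left, real_inner_smul_left]
    rw [hZJZ, hJZJZ, hq_def]
    field_simp
    ring
  have hW : W = X + p • Z + q • J Z := by
    simp only [hX_def]; abel
  rw [hW, map_add, map_add, map_smul, map_smul, hQZ, hQJZ, hQX X hXZ hXJZ,
    smul_add, smul_add, smul_smul, smul_smul, smul_smul, smul_smul]
  ring_nf
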